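/- Let $V$ be a $k$-dimensional linear subspace of $\mathbb{R}^N$, let $S$ be a $k$-dimensional unit sphere of the form $S=\{x:\sum_{j\in J}x_j^2=1,\ x_j=0\ (j\notin J)\}$ for a $(k+1)$-element set $J\subset\{1,\dots,N\}$ with $\mathrm{Span}(V^{\perp}\cup\{e_j:j\in J\})=\mathbb{R}^N$. Then there exists $y_0\in V^{\perp}\cap S$ and $\delta>0$ such that the orthogonal projection $P_V$ restricted to $S\cap B(y_0,\delta)$ is a bi-Lipschitz homeomorphism onto its image. -/

import Mathlib

open MeasureTheory Metric Set

/-- The `k`-dimensional unit sphere spanned by the coordinates in `J`: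
`{x ∈ ℝ^N : ∑_{j ∈ J} x_j² = 1, x_j = 0 for j ∉ J}`. -/
def sphereJ (N : ℕ) (J : Finset (Fin N)) : Set (EuclideanSpace ℝ (Fin N)) :=
  {x | ∑ j ∈ J, (x j) ^ 2 = 1 ∧ ∀ j ∉ J, x j = 0}

noncomputable section

namespace ProjBiLip

variable {N : ℕ}

/-- The coordinate subspace spanned by `e_j`, `j ∈ J`. -/
def WJ (N : ℕ) (J : Finset (Fin N)) : Submodule ℝ (EuclideanSpace ℝ (Fin N)) :=
  Submodule.span ℝ ((fun j => EuclideanSpace.single j (1 : ℝ)) '' (J : Set (Fin N)))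

lemma mem_WJ_iff (J : Finset (Fin N)) (x : EuclideanSpace ℝ (Fin N)) :
    x ∈ WJ N J ↔ ∀ j ∉ J, x j = 0 := by
  constructor
  · intro hx j hj
    have : WJ N J ≤ LinearMap.ker ((EuclideanSpace.proj j : EuclideanSpace ℝ (Fin N) →L[ℝ] ℝ).toLinearMap) := by
      rw [WJ, Submodule.span_le]
      rintro - ⟨i, hi, rfl⟩
      simp only [SetLike.mem_coe, LinearMap.mem_ker, ContinuousLinearMap.coe_coe]
      have : (EuclideanSpace.single i (1:ℝ)) j = 0 := by
        rw [EuclideanSpace.single_apply]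
        simp only [ite_eq_right_iff]
        intro h; exact absurd (h ▸ hi) hj
      simpa using this
    simpa using this hx
  · intro h
    have hrep : x = ∑ j ∈ J, x j • EuclideanSpace.single j (1 : ℝ) := by
      ext i
      have := map_sum (EuclideanSpace.proj i : EuclideanSpace ℝ (Fin N) →L[ℝ] ℝ)
        (fun j => x j • EuclideanSpace.single j (1 : ℝ)) J
      simp only [PiLp.proj_apply] at this
      rw [this]
      simp only [PiLp.smul_apply, smul_eq_mul, EuclideanSpace.single_apply]
      by_cases hi : i ∈ J
      · rw [Finset.sum_eq_single i]
        · simp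
        · intro b _ hb; simp [Ne.symm hb]
        · intro hh; exact absurd hi hh
      · rw [h i hi, Finset.sum_eq_zero]
        intro b hb
        have : i ≠ b := by rintro rfl; exact hi hb
        simp [this]
    rw [hrep]
    exact Submodule.sum_mem _ fun j hj => Submodule.smul_mem _ _
      (Submodule.subset_span ⟨j, hj, rfl⟩)

lemma finrank_WJ (J : Finset (Fin N)) : Module.finrank ℝ (WJ N J) = J.card := by
  classical
  have hb : LinearIndependent ℝ
      (fun j : (J : Set (Fin N)) => EuclideanSpace.single (j : Fin N) (1 : ℝ)) := by
    have := (EuclideanSpace.orthonormal_single (𝕜 := ℝ) (ι := Fin N)).comp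
      (fun j : (J : Set (Fin N)) => (j : Fin N)) Subtype.val_injective
    exact this.linearIndependent
  have h2 := finrank_span_eq_card hb
  rw [WJ, Set.image_eq_range, h2]
  rw [show Fintype.card (J : Set (Fin N)) = Fintype.card {x // x ∈ J} from
    Fintype.card_congr (Equiv.subtypeEquivRight (by simp)), Fintype.card_coe]

end ProjBiLip

namespace ProjBiLip

open RealInnerProductSpace in
lemma exists_antilip {E F : Type*} [NormedAddCommGroup E] [NormedSpace ℝ E]
    [NormedAddCommGroup F] [NormedSpace ℝ F] [FiniteDimensional ℝ E]
    (f : E →ₗ[ℝ] F) (hf : Function.Injective f) :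
    ∃ c > (0 : ℝ), ∀ v, c * ‖v‖ ≤ ‖f v‖ := by
  set e := LinearEquiv.ofInjective f hf with he
  haveI : FiniteDimensional ℝ (LinearMap.range f) :=
    Module.Finite.range f
  let g := LinearMap.toContinuousLinearMap e.symm.toLinearMap
  refine ⟨(max ‖g‖ 1)⁻¹, by positivity, fun v => ?_⟩
  have h0 : (0 : ℝ) < max ‖g‖ 1 := lt_of_lt_of_le one_pos (le_max_right _ _)
  have h1 : ‖v‖ ≤ max ‖g‖ 1 * ‖f v‖ := by
    have hs : g (e v) = v := by simp [g]
    have h2 : ‖g (e v)‖ ≤ ‖g‖ * ‖e v‖ := g.le_opNorm _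
    have h3 : ‖(e v : F)‖ = ‖f v‖ := rfl
    calc ‖v‖ = ‖g (e v)‖ := by rw [hs]
      _ ≤ ‖g‖ * ‖e v‖ := h2
      _ ≤ max ‖g‖ 1 * ‖f v‖ := by
          rw [show ‖e v‖ = ‖f v‖ from h3]
          gcongr; exact le_max_left _ _
  rw [inv_mul_le_iff₀ h0]
  exact h1

end ProjBiLip

end

open RealInnerProductSpace


set_option maxHeartbeats 1600000 in
/-- claim (6.2) in Lemma 6.4: let `V` be a `k`-dimensional subspace of
`ℝ^N` and let `S = S_J` for a `(k+1)`-element set `J` with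
`Span(V^⊥ ∪ {e_j : j ∈ J}) = ℝ^N`.  Then there are `y₀ ∈ V^⊥ ∩ S` and `δ > 0` such that
the orthogonal projection `P_V` restricted to `S ∩ B(y₀, δ)` is bi-Lipschitz onto its
image. -/
theorem projection_biLipschitz_near_point (N k : ℕ) (hk : 1 ≤ k) (hkN : k + 1 ≤ N)
    (V : Submodule ℝ (EuclideanSpace ℝ (Fin N))) (hV : Module.finrank ℝ V = k)
    (J : Finset (Fin N)) (hJ : J.card = k + 1)
    (hspan : Submodule.span ℝ
        ((Vᗮ : Set (EuclideanSpace ℝ (Fin N))) ∪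
          ((fun j => EuclideanSpace.single j (1 : ℝ)) '' (J : Set (Fin N)))) = ⊤) :
    ∃ y₀ ∈ (Vᗮ : Set (EuclideanSpace ℝ (Fin N))) ∩ sphereJ N J, ∃ δ > (0 : ℝ),
      ∃ c C : ℝ, 0 < c ∧
        ∀ x ∈ sphereJ N J ∩ Metric.ball y₀ δ, ∀ y ∈ sphereJ N J ∩ Metric.ball y₀ δ,
          c * ‖x - y‖ ≤ ‖(V.orthogonalProjectionOnto x : V) - V.orthogonalProjectionOnto y‖ ∧
          ‖(V.orthogonalProjectionOnto x : V) - V.orthogonalProjectionOnto y‖ ≤ C * ‖x - y‖ := by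
  classical
  have hW : Module.finrank ℝ (ProjBiLip.WJ N J) = k + 1 := by
    rw [ProjBiLip.finrank_WJ J, hJ]
  have hsup : Vᗮ ⊔ ProjBiLip.WJ N J = ⊤ := by
    rw [Submodule.span_union, Submodule.span_eq] at hspan
    exact hspan
  have hVperp : Module.finrank ℝ Vᗮ = N - k := by
    have := Submodule.finrank_add_finrank_orthogonal (K := V)
    rw [hV, finrank_euclideanSpace_fin] at this
    omega
  have hinf : Module.finrank ℝ ↥(Vᗮ ⊓ ProjBiLip.WJ N J) = 1 := by
    have h2 := Submodule.finrank_sup_add_finrank_inf_eq Vᗮ (ProjBiLip.WJ N J)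
    rw [hsup, hVperp, hW, finrank_top, finrank_euclideanSpace_fin] at h2
    omega
  -- find the unit vector y₀
  haveI : Nontrivial ↥(Vᗮ ⊓ ProjBiLip.WJ N J) := by
    apply Module.finrank_pos_iff (R := ℝ) |>.mp; rw [hinf]; norm_num
  obtain ⟨v, hv0⟩ := exists_ne (0 : ↥(Vᗮ ⊓ ProjBiLip.WJ N J))
  have hy'0 : (v : EuclideanSpace ℝ (Fin N)) ≠ 0 := fun h => hv0 (Subtype.ext h)
  set y₀ : EuclideanSpace ℝ (Fin N) := ‖(v : EuclideanSpace ℝ (Fin N))‖⁻¹ • v with hy₀def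
  have hy₀norm : ‖y₀‖ = 1 := norm_smul_inv_norm hy'0
  have hy₀ne : y₀ ≠ 0 := by intro h; rw [h, norm_zero] at hy₀norm; norm_num at hy₀norm
  have hy₀D : y₀ ∈ Vᗮ ⊓ ProjBiLip.WJ N J := Submodule.smul_mem _ _ v.2
  clear_value y₀
  have hy₀V : y₀ ∈ Vᗮ := hy₀D.1
  have hy₀W : y₀ ∈ ProjBiLip.WJ N J := hy₀D.2
  have hD : Vᗮ ⊓ ProjBiLip.WJ N J = (ℝ ∙ y₀) := by
    refine (Submodule.eq_of_le_of_finrank_le ?_ ?_).symm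
    · rw [Submodule.span_singleton_le_iff_mem]; exact hy₀D
    · rw [hinf, finrank_span_singleton hy₀ne]
  -- norms on the sphere
  have hsum : ∀ z : EuclideanSpace ℝ (Fin N), (∀ j ∉ J, z j = 0) →
      ∑ j ∈ J, z j ^ 2 = ‖z‖ ^ 2 := by
    intro z hz
    rw [← real_inner_self_eq_norm_sq, PiLp.inner_apply]
    simp only [RCLike.inner_apply, conj_trivial]
    rw [Finset.sum_subset (Finset.subset_univ J)]
    · exact Finset.sum_congr rfl fun j _ => (pow_two (z j)).symm ▸ by ring
    · intro i _ hi; rw [hz i hi]; ring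
  have hy₀S : y₀ ∈ sphereJ N J := by
    have hz := (ProjBiLip.mem_WJ_iff J y₀).mp hy₀W
    exact ⟨by rw [hsum y₀ hz, hy₀norm]; norm_num, hz⟩
  have hSnorm : ∀ z ∈ sphereJ N J, ‖z‖ = 1 := by
    intro z hz
    have h1 : ‖z‖ ^ 2 = 1 := by rw [← hsum z hz.2]; exact hz.1
    nlinarith [norm_nonneg z]
  -- the tangent space and injectivity of the projection on it
  set T : Submodule ℝ (EuclideanSpace ℝ (Fin N)) := ProjBiLip.WJ N J ⊓ (ℝ ∙ y₀)ᗮ with hT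
  set P := V.orthogonalProjectionOnto with hP
  let g : T →ₗ[ℝ] V := (P.toLinearMap).comp T.subtype
  have hginj : Function.Injective g := by
    rw [← LinearMap.ker_eq_bot, LinearMap.ker_eq_bot']
    intro w hw
    have h1 : (w : EuclideanSpace ℝ (Fin N)) ∈ Vᗮ := by
      apply Submodule.orthogonalProjectionOnto_eq_zero_iff.mp
      exact hw
    have h2 : (w : EuclideanSpace ℝ (Fin N)) ∈ (ℝ ∙ y₀) := hD ▸ ⟨h1, w.2.1⟩
    have h3 : (w : EuclideanSpace ℝ (Fin N)) ∈ (ℝ ∙ y₀)ᗮ := w.2.2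
    exact Subtype.ext
      (Submodule.disjoint_def.mp (Submodule.orthogonal_disjoint _) _ h2 h3)
  obtain ⟨c₀, hc₀, hg⟩ := ProjBiLip.exists_antilip g hginj
  refine ⟨y₀, ⟨hy₀V, hy₀S⟩, 1/2, by norm_num, c₀/2, 1, by positivity, ?_⟩
  rintro x ⟨hxS, hxB⟩ y ⟨hyS, hyB⟩
  set u := x - y with hu
  clear_value u
  have huW : u ∈ ProjBiLip.WJ N J := by
    rw [hu]
    exact Submodule.sub_mem _ ((ProjBiLip.mem_WJ_iff J x).mpr hxS.2)
      ((ProjBiLip.mem_WJ_iff J y).mpr hyS.2)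
  have hxn : ‖x‖ = 1 := hSnorm x hxS
  have hyn : ‖y‖ = 1 := hSnorm y hyS
  set a : ℝ := (inner ℝ (y₀) (u) : ℝ) with ha
  clear_value a
  have hxyu : (inner ℝ (x + y) (u) : ℝ) = 0 := by
    have h1 : (inner ℝ (x + y) (x - y) : ℝ) = ‖x‖ ^ 2 - ‖y‖ ^ 2 := by
      rw [inner_add_left, inner_sub_right, inner_sub_right,
        real_inner_self_eq_norm_sq, real_inner_self_eq_norm_sq,
        real_inner_comm y x]
      ring
    rw [hu, h1, hxn, hyn]; ring
  have haeq : a = (inner ℝ (y₀ - (1/2 : ℝ) • (x + y)) (u) : ℝ) := by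
    have h2 : (inner ℝ ((1/2 : ℝ) • (x + y)) (u) : ℝ) = 0 := by
      rw [real_inner_smul_left, hxyu, mul_zero]
    rw [inner_sub_left, h2, sub_zero]
    exact ha
  have hdx : ‖y₀ - x‖ < 1/2 := by
    have := Metric.mem_ball.mp hxB
    rw [dist_eq_norm] at this
    rwa [norm_sub_rev]
  have hdy : ‖y₀ - y‖ < 1/2 := by
    have := Metric.mem_ball.mp hyB
    rw [dist_eq_norm] at this
    rwa [norm_sub_rev]
  have hmid : ‖y₀ - (1/2 : ℝ) • (x + y)‖ ≤ 1/2 * (‖y₀ - x‖ + ‖y₀ - y‖) := by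
    have hrw : y₀ - (1/2 : ℝ) • (x + y) = (1/2 : ℝ) • ((y₀ - x) + (y₀ - y)) := by
      module
    rw [hrw, norm_smul]
    have : ‖(1/2 : ℝ)‖ = 1/2 := by rw [Real.norm_eq_abs]; norm_num
    rw [this]
    have := norm_add_le (y₀ - x) (y₀ - y)
    linarith
  have habound : |a| ≤ 1/2 * ‖u‖ := by
    rw [haeq]
    calc |(inner ℝ (y₀ - (1/2 : ℝ) • (x + y)) (u) : ℝ)|
        ≤ ‖y₀ - (1/2 : ℝ) • (x + y)‖ * ‖u‖ := abs_real_inner_le_norm _ _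
      _ ≤ 1/2 * ‖u‖ := by
          apply mul_le_mul_of_nonneg_right _ (norm_nonneg u)
          linarith
  set t := u - a • y₀ with htdef
  clear_value t
  have htT : t ∈ T := by
    refine Submodule.mem_inf.mpr ⟨?_, ?_⟩
    · rw [htdef]
      exact Submodule.sub_mem _ huW (Submodule.smul_mem _ _ hy₀W)
    · rw [Submodule.mem_orthogonal_singleton_iff_inner_right]
      rw [htdef, inner_sub_right, real_inner_smul_right, real_inner_self_eq_norm_sq,
        hy₀norm]
      rw [← ha]
      ring
  have htn : ‖t‖ ^ 2 = ‖u‖ ^ 2 - a ^ 2 := by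
    have h1 : (inner ℝ (u) (a • y₀) : ℝ) = a * a := by
      rw [real_inner_smul_right, real_inner_comm]
      rw [← ha]
    have h2 : ‖a • y₀‖ = |a| := by
      rw [norm_smul, hy₀norm, mul_one, Real.norm_eq_abs]
    rw [htdef, norm_sub_sq_real, h1, h2, sq_abs]
    ring
  have htl : 1/2 * ‖u‖ ≤ ‖t‖ := by
    have ha2 : a ^ 2 ≤ 1/4 * ‖u‖ ^ 2 := by
      have h1 : |a| * |a| ≤ (1/2 * ‖u‖) * (1/2 * ‖u‖) :=
        mul_le_mul habound habound (abs_nonneg a) (by positivity)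
      have h2 : |a| * |a| = a ^ 2 := by rw [← sq_abs]; ring
      have h3 : (1/2 * ‖u‖) * (1/2 * ‖u‖) = 1/4 * ‖u‖ ^ 2 := by ring
      linarith
    have htsq : (1/2 * ‖u‖) ^ 2 ≤ ‖t‖ ^ 2 := by
      have h4 : (1/2 * ‖u‖) ^ 2 = 1/4 * ‖u‖ ^ 2 := by ring
      have h5 : (0 : ℝ) ≤ ‖u‖ ^ 2 := sq_nonneg _
      linarith
    exact (abs_le_of_sq_le_sq' htsq (norm_nonneg t)).2.trans (le_abs_self _) |>.trans
      (le_of_eq (abs_of_nonneg (norm_nonneg t)))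
  have hPy₀ : P y₀ = 0 :=
    Submodule.orthogonalProjectionOnto_apply_of_mem_orthogonal hy₀V
  have hPut : P u = P t := by
    rw [htdef, map_sub, _root_.map_smul, hPy₀, smul_zero, sub_zero]
  have hgt : c₀ * ‖t‖ ≤ ‖P t‖ := hg ⟨t, htT⟩
  have hPsub : P x - P y = P u := by rw [hu, map_sub]
  constructor
  · calc c₀/2 * ‖u‖ = c₀ * (1/2 * ‖u‖) := by ring
      _ ≤ c₀ * ‖t‖ := mul_le_mul_of_nonneg_left htl (le_of_lt hc₀)
      _ ≤ ‖P t‖ := hgt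
      _ = ‖P u‖ := by rw [hPut]
      _ = ‖P x - P y‖ := by rw [hPsub]
  · rw [hPsub]
    calc ‖P u‖ ≤ ‖P‖ * ‖u‖ := P.le_opNorm u
      _ ≤ 1 * ‖u‖ := by
          have := Submodule.orthogonalProjectionOnto_norm_le V
          have := norm_nonneg u
          nlinarith
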